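/- Let F be a number field of degree n with 3 ∤ n in which 3 splits completely. Then the unit equation λ + μ = 1 has no solutions with λ, μ ∈ O_F^×. -/

import Mathlib

open NumberField

set_option synthInstance.maxHeartbeats 800000 in
set_option maxHeartbeats 1600000 in
/-- If `P` is a prime of `𝓞 F` over `3` with residue degree `1`, then any solution of the
unit equation satisfies `λ ≡ -1 mod P`. -/
lemma aux_mem_prime (F : Type*) [Field F] [NumberField F]
    (P : Ideal (𝓞 F)) (hP : P.IsPrime) (h3 : (3 : 𝓞 F) ∈ P)
    (hf : Ideal.inertiaDeg' (Ideal.span {(3 : ℤ)}) P = 1)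
    (lam mu : (𝓞 F)ˣ) (h : (lam : 𝓞 F) + (mu : 𝓞 F) = 1) :
    (lam : 𝓞 F) + 1 ∈ P := by
  classical
  haveI := hP
  have hc : Ideal.comap (algebraMap ℤ (𝓞 F)) P = Ideal.span {(3 : ℤ)} := by
    by_contra hcne
    rw [Ideal.inertiaDeg', dif_neg hcne] at hf
    exact one_ne_zero hf.symm
  haveI hmax3 : (Ideal.span {(3 : ℤ)}).IsMaximal :=
    PrincipalIdealRing.isMaximal_of_irreducible Int.prime_three.irreducible
  haveI : P.LiesOver (Ideal.span {(3 : ℤ)}) := ⟨hc.symm⟩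
  rw [Ideal.inertiaDeg'_algebraMap] at hf
  letI : Field (ℤ ⧸ Ideal.span {(3 : ℤ)}) := Ideal.Quotient.field _
  have hsurj : Function.Surjective
      (algebraMap (ℤ ⧸ Ideal.span {(3 : ℤ)}) (𝓞 F ⧸ P)) :=
    Algebra.surjective_algebraMap_iff.mpr (Subalgebra.bot_eq_top_of_finrank_eq_one hf).symm
  have hint : ∀ x : 𝓞 F ⧸ P, ∃ z : ℤ, x = (z : 𝓞 F ⧸ P) := by
    intro x
    obtain ⟨y, hy⟩ := hsurj x
    obtain ⟨z, rfl⟩ := Ideal.Quotient.mk_surjective y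
    refine ⟨z, ?_⟩
    rw [← hy]
    rw [show (Ideal.Quotient.mk (Ideal.span {(3 : ℤ)})) z
        = ((z : ℤ ⧸ Ideal.span {(3 : ℤ)})) from by
      rw [← map_intCast (Ideal.Quotient.mk (Ideal.span {(3 : ℤ)})) z, Int.cast_id]]
    rw [map_intCast]
  have h3K : (3 : 𝓞 F ⧸ P) = 0 := by
    have : Ideal.Quotient.mk P (3 : 𝓞 F) = 0 := Ideal.Quotient.eq_zero_iff_mem.mpr h3
    rwa [map_ofNat] at this
  have hval : ∀ x : 𝓞 F ⧸ P, x = 0 ∨ x = 1 ∨ x = -1 := by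
    intro x
    obtain ⟨z, rfl⟩ := hint x
    have h2 : ((z : ℤ) : 𝓞 F ⧸ P) = ((z % 3 : ℤ) : 𝓞 F ⧸ P) := by
      conv_lhs => rw [← Int.mul_ediv_add_emod z 3]
      push_cast
      rw [h3K]; ring
    have h3' : z % 3 = 0 ∨ z % 3 = 1 ∨ z % 3 = 2 := by omega
    rcases h3' with hz | hz | hz <;> rw [h2, hz]
    · left; exact Int.cast_zero
    · right; left; exact Int.cast_one
    · right; right
      push_cast
      rw [show (2 : 𝓞 F ⧸ P) = 3 - 1 by ring, h3K]; ring
  set lb := Ideal.Quotient.mk P (lam : 𝓞 F) with hlb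
  set mb := Ideal.Quotient.mk P (mu : 𝓞 F) with hmb
  have hlu : IsUnit lb := lam.isUnit.map (Ideal.Quotient.mk P)
  have hmuu : IsUnit mb := mu.isUnit.map (Ideal.Quotient.mk P)
  have hsum : lb + mb = 1 := by rw [hlb, hmb, ← map_add, h, map_one]
  rw [← Ideal.Quotient.eq_zero_iff_mem, map_add, map_one, ← hlb]
  rcases hval lb with h0 | h1 | hm1
  · exact absurd h0 hlu.ne_zero
  · exfalso
    apply hmuu.ne_zero
    have : mb = 1 - lb := by rw [← hsum]; ring
    rw [this, h1]; ring
  · rw [hm1]; ring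

/-- If `3` splits completely, any solution of the unit equation satisfies
`λ ≡ -1 mod 3`. -/
lemma aux_dvd (F : Type*) [Field F] [NumberField F]
    (hsplit : ∀ P : Ideal (𝓞 F), P.IsPrime → (3 : 𝓞 F) ∈ P →
      Ideal.ramificationIdx' (Ideal.span {(3 : ℤ)}) P = 1 ∧
      Ideal.inertiaDeg' (Ideal.span {(3 : ℤ)}) P = 1)
    (lam mu : (𝓞 F)ˣ) (h : (lam : 𝓞 F) + (mu : 𝓞 F) = 1) :
    (3 : 𝓞 F) ∣ (lam : 𝓞 F) + 1 := by
  classical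
  have h30 : (3 : 𝓞 F) ≠ 0 := by
    intro hcon
    have h' := congrArg (algebraMap (𝓞 F) F) hcon
    rw [map_ofNat, map_zero] at h'
    exact three_ne_zero h'
  set I : Ideal (𝓞 F) := Ideal.span {(3 : 𝓞 F)} with hI
  have hmap : Ideal.map (algebraMap ℤ (𝓞 F)) (Ideal.span {(3 : ℤ)}) = I := by
    rw [Ideal.map_span, Set.image_singleton, map_ofNat]
  have hI0 : I ≠ ⊥ := fun hbot => h30 (Ideal.span_singleton_eq_bot.mp hbot)
  have hImap0 : Ideal.map (algebraMap ℤ (𝓞 F)) (Ideal.span {(3 : ℤ)}) ≠ ⊥ := by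
    rw [hmap]; exact hI0
  have hsq : Squarefree I := by
    rw [UniqueFactorizationMonoid.squarefree_iff_nodup_normalizedFactors
      (by rw [Submodule.zero_eq_bot]; exact hI0)]
    rw [Multiset.nodup_iff_count_le_one]
    intro P
    by_cases hPm : P ∈ UniqueFactorizationMonoid.normalizedFactors I
    · have hPprime := UniqueFactorizationMonoid.prime_of_normalized_factor P hPm
      have hPbot : P ≠ ⊥ := by
        rw [← Submodule.zero_eq_bot]; exact hPprime.ne_zero
      have hPp : P.IsPrime := Ideal.isPrime_of_prime hPprime
      have h3P : (3 : 𝓞 F) ∈ P := by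
        have hle : I ≤ P :=
          Ideal.le_of_dvd (UniqueFactorizationMonoid.dvd_of_mem_normalizedFactors hPm)
        exact hle (Ideal.mem_span_singleton_self _)
      have he := (hsplit P hPp h3P).1
      rw [Ideal.IsDedekindDomain.ramificationIdx'_eq_normalizedFactors_count hImap0 hPp hPbot,
        hmap] at he
      exact le_of_eq he
    · rw [Multiset.count_eq_zero_of_notMem hPm]; exact zero_le_one
  have hrad : (lam : 𝓞 F) + 1 ∈ I.radical := by
    rw [Ideal.radical_eq_sInf]
    apply Submodule.mem_sInf.mpr
    rintro J ⟨hJle, hJp⟩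
    have h3J : (3 : 𝓞 F) ∈ J := hJle (Ideal.mem_span_singleton_self _)
    exact aux_mem_prime F J hJp h3J (hsplit J hJp h3J).2 lam mu h
  obtain ⟨k, hk⟩ := Ideal.mem_radical_iff.mp hrad
  have hdvd : I ∣ (Ideal.span {(lam : 𝓞 F) + 1}) ^ k := by
    rw [Ideal.span_singleton_pow]
    exact Ideal.dvd_iff_le.mpr ((Ideal.span_singleton_le_iff_mem I).mpr hk)
  have hfin := Ideal.le_of_dvd (hsq.isRadical k _ hdvd)
  exact Ideal.mem_span_singleton.mp (hfin (Ideal.mem_span_singleton_self _))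

/-- If `-1 + 3c` is a unit of `𝓞 F`, then `3 ∣ Tr(c)`. -/
lemma aux_trace_dvd (F : Type*) [Field F] [NumberField F]
    (c : 𝓞 F) (hu : IsUnit (-1 + 3 * c)) :
    (3 : ℤ) ∣ Algebra.trace ℤ (𝓞 F) c := by
  obtain ⟨r, hr⟩ := Algebra.norm_one_add_smul (-3 : ℤ) c
  have hnu : IsUnit (Algebra.norm ℤ (-1 + 3 * c)) := hu.map (Algebra.norm ℤ)
  have heq : (-1 : 𝓞 F) + 3 * c = (-1 : 𝓞 F) * (1 + (-3 : ℤ) • c) := by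
    rw [zsmul_eq_mul]; push_cast; ring
  rw [heq, map_mul, hr] at hnu
  have hE : IsUnit (1 + Algebra.trace ℤ (𝓞 F) c * (-3) + r * (-3) ^ 2) :=
    isUnit_of_mul_isUnit_right hnu
  have hE' := Int.isUnit_iff.mp hE
  have h9 : ((-3 : ℤ)) ^ 2 = 9 := by norm_num
  rw [h9] at hE'
  rcases hE' with h1 | h1 <;> omega

/-- **Triantafillou.** Let `F` be a number field of degree `n` with
`3 ∤ n` in which `3` splits completely.  Then the unit equation `λ + μ = 1` has no
solutions in units of `𝓞 F`. -/
theorem no_unit_equation_solution_of_three_splits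
    (F : Type*) [Field F] [NumberField F] (n : ℕ) (hn : Module.finrank ℚ F = n)
    (hndvd : ¬ (3 ∣ n))
    (hsplit : ∀ P : Ideal (𝓞 F), P.IsPrime → (3 : 𝓞 F) ∈ P →
      Ideal.ramificationIdx' (Ideal.span {(3 : ℤ)}) P = 1 ∧
      Ideal.inertiaDeg' (Ideal.span {(3 : ℤ)}) P = 1) :
    ¬ ∃ lam mu : (𝓞 F)ˣ, (lam : 𝓞 F) + (mu : 𝓞 F) = 1 := by
  rintro ⟨lam, mu, h⟩
  have h30 : (3 : 𝓞 F) ≠ 0 := by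
    intro hcon
    have h' := congrArg (algebraMap (𝓞 F) F) hcon
    rw [map_ofNat, map_zero] at h'
    exact three_ne_zero h'
  obtain ⟨c, hc⟩ := aux_dvd F hsplit lam mu h
  obtain ⟨d, hd⟩ := aux_dvd F hsplit mu lam (by rw [add_comm]; exact h)
  have hlam : (lam : 𝓞 F) = -1 + 3 * c := by linear_combination hc
  have hmu : (mu : 𝓞 F) = -1 + 3 * d := by linear_combination hd
  have h1 : (3 : ℤ) ∣ Algebra.trace ℤ (𝓞 F) c :=
    aux_trace_dvd F c (by rw [← hlam]; exact lam.isUnit)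
  have h2 : (3 : ℤ) ∣ Algebra.trace ℤ (𝓞 F) d :=
    aux_trace_dvd F d (by rw [← hmu]; exact mu.isUnit)
  have h3' : (3 : 𝓞 F) * (c + d) = 3 * 1 := by linear_combination h - hlam - hmu
  have hcd : c + d = 1 := mul_left_cancel₀ h30 h3'
  have htr : Algebra.trace ℤ (𝓞 F) c + Algebra.trace ℤ (𝓞 F) d
      = (Module.finrank ℤ (𝓞 F) : ℤ) := by
    rw [← map_add, hcd, show (1 : 𝓞 F) = algebraMap ℤ (𝓞 F) 1 from by simp,
      Algebra.trace_algebraMap]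
    simp
  rw [NumberField.RingOfIntegers.rank, hn] at htr
  apply hndvd
  have hdn : (3 : ℤ) ∣ (n : ℤ) := htr ▸ dvd_add h1 h2
  exact_mod_cast hdn
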